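/- Let T be a finite tree (a connected acyclic simple graph) that admits a z-coloring using k colors. Then the number of vertices of T satisfies |V(T)| ≥ (k−3)·2^{k−1} + k + 2 (an inequality of integers). -/

import Mathlib

/-- A proper vertex coloring of `G` using exactly the colors `{1, …, k}`:
every vertex gets a color in `{1, …, k}`, adjacent vertices get different
colors, and every color in `{1, …, k}` is used. -/
def IsProperColoring {V : Type*} (G : SimpleGraph V) (k : ℕ) (c : V → ℕ) : Prop :=
  (∀ v, c v ∈ Finset.Icc 1 k) ∧
  (∀ u v, G.Adj u v → c u ≠ c v) ∧
  (∀ i ∈ Finset.Icc 1 k, ∃ v, c v = i)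

/-- A Grundy coloring of `G` using `k` colors: a proper coloring using `k` colors
such that every vertex of color `j` has, for each color `i < j`, a neighbor of color `i`. -/
def IsGrundyColoring {V : Type*} (G : SimpleGraph V) (k : ℕ) (c : V → ℕ) : Prop :=
  IsProperColoring G k c ∧
  ∀ v, ∀ i ∈ Finset.Icc 1 k, i < c v → ∃ w, G.Adj v w ∧ c w = i

/-- In a coloring `c` of `G` with colors `{1, …, k}`, a vertex `v` is color-dominating
if for every color `j ∈ {1, …, k}` different from the color of `v`, the vertex `v`
has a neighbor of color `j`. -/
def IsCDVertex {V : Type*} (G : SimpleGraph V) (k : ℕ) (c : V → ℕ) (v : V) : Prop :=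
  ∀ j ∈ Finset.Icc 1 k, j ≠ c v → ∃ w, G.Adj v w ∧ c w = j

/-- A color-dominating coloring (b-coloring) of `G` using `k` colors: a proper coloring
using `k` colors in which every color class contains a color-dominating vertex. -/
def IsBColoring {V : Type*} (G : SimpleGraph V) (k : ℕ) (c : V → ℕ) : Prop :=
  IsProperColoring G k c ∧
  ∀ i ∈ Finset.Icc 1 k, ∃ v, c v = i ∧ IsCDVertex G k c v

/-- A z-coloring of `G` using `k` colors: a proper coloring which is simultaneously
a Grundy coloring and a color-dominating coloring, and which admits color-dominating
vertices `u 1, …, u k` with `c (u j) = j` such that `u k` is adjacent to each `u j`, `j ≠ k`. -/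
def IsZColoring {V : Type*} (G : SimpleGraph V) (k : ℕ) (c : V → ℕ) : Prop :=
  IsGrundyColoring G k c ∧ IsBColoring G k c ∧
  ∃ u : ℕ → V,
    (∀ j ∈ Finset.Icc 1 k, c (u j) = j ∧ IsCDVertex G k c (u j)) ∧
    (∀ j ∈ Finset.Icc 1 k, j ≠ k → G.Adj (u k) (u j))

/-- The Grundy number of `G`: the maximum `k` such that `G` admits a Grundy coloring
using `k` colors. -/
noncomputable def grundyNumber {V : Type*} (G : SimpleGraph V) : ℕ :=
  sSup {k | ∃ c : V → ℕ, IsGrundyColoring G k c}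

/-- The b-chromatic number of `G`: the maximum `k` such that `G` admits a b-coloring
using `k` colors. -/
noncomputable def bNumber {V : Type*} (G : SimpleGraph V) : ℕ :=
  sSup {k | ∃ c : V → ℕ, IsBColoring G k c}

/-- The z-chromatic number of `G`: the maximum `k` such that `G` admits a z-coloring
using `k` colors. -/
noncomputable def zNumber {V : Type*} (G : SimpleGraph V) : ℕ :=
  sSup {k | ∃ c : V → ℕ, IsZColoring G k c}


section ST17AUX


open SimpleGraph Finset

variable {V : Type*} [Fintype V] [DecidableEq V] {G : SimpleGraph V}

/-- unique neighbor towards x -/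
lemma st17_parent_unique (hT : G.IsTree) {x v p q : V}
    (hp : G.Adj p v) (hq : G.Adj q v)
    (hdp : G.dist x p + 1 = G.dist x v) (hdq : G.dist x q + 1 = G.dist x v) : p = q := by
  have hconn := hT.isConnected
  obtain ⟨P, hP⟩ := (hconn x p).exists_walk_length_eq_dist
  obtain ⟨Q, hQ⟩ := (hconn x q).exists_walk_length_eq_dist
  have hW1 : (P.concat hp).IsPath := by
    apply SimpleGraph.Walk.isPath_of_length_eq_dist
    rw [SimpleGraph.Walk.length_concat, hP, hdp]
  have hW2 : (Q.concat hq).IsPath := by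
    apply SimpleGraph.Walk.isPath_of_length_eq_dist
    rw [SimpleGraph.Walk.length_concat, hQ, hdq]
  have huniq := hT.existsUnique_path x v
  have heq : P.concat hp = Q.concat hq :=
    (huniq.unique hW1 hW2)
  have := congrArg SimpleGraph.Walk.reverse heq
  rw [SimpleGraph.Walk.reverse_concat, SimpleGraph.Walk.reverse_concat] at this
  have := congrArg (fun w => SimpleGraph.Walk.getVert w 1) this
  simpa [SimpleGraph.Walk.getVert_cons] using this

set_option linter.unusedSectionVars false

/-- in a tree, adjacent vertices are at different distances from r -/
lemma st17_adj_dist_ne (hT : G.IsTree) {r v w : V} (hadj : G.Adj v w) :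
    G.dist v r ≠ G.dist w r := by
  intro hEq
  have hconn := hT.isConnected
  obtain ⟨P, hPl⟩ := (hconn v r).exists_walk_length_eq_dist
  obtain ⟨Q, hQl⟩ := (hconn w r).exists_walk_length_eq_dist
  have hP : P.IsPath := P.isPath_of_length_eq_dist hPl
  have hQ : Q.IsPath := Q.isPath_of_length_eq_dist hQl
  have hvQ : v ∉ Q.support := by
    intro hv
    have h1 : 1 ≤ (Q.takeUntil v hv).length := by
      rcases Nat.eq_zero_or_pos (Q.takeUntil v hv).length with h0 | h1
      · exact absurd (SimpleGraph.Walk.eq_of_length_eq_zero h0).symm hadj.ne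
      · exact h1
    have h2 : G.dist v r ≤ (Q.dropUntil v hv).length := SimpleGraph.dist_le _
    have h3 := congrArg SimpleGraph.Walk.length (Q.take_spec hv)
    rw [SimpleGraph.Walk.length_append] at h3
    omega
  have hW : (SimpleGraph.Walk.cons hadj Q).IsPath :=
    (SimpleGraph.Walk.cons_isPath_iff _ _).2 ⟨hQ, hvQ⟩
  have := (hT.existsUnique_path v r).unique hW hP
  have hl := congrArg SimpleGraph.Walk.length this
  simp only [SimpleGraph.Walk.length_cons] at hl
  omega

/-- a non-parent neighbor of v is a child -/
lemma st17_child (hT : G.IsTree) {r v p w : V}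
    (hpar : G.Adj p v) (hd : G.dist v r = G.dist p r + 1)
    (hw : G.Adj v w) (hne : w ≠ p) : G.dist w r = G.dist v r + 1 := by
  have hconn := hT.isConnected
  have h1 : G.dist w r ≤ G.dist w v + G.dist v r := hconn.dist_triangle
  have h2 : G.dist v r ≤ G.dist v w + G.dist w r := hconn.dist_triangle
  have hvw : G.dist v w = 1 := SimpleGraph.dist_eq_one_iff_adj.2 hw
  have hwv : G.dist w v = 1 := SimpleGraph.dist_eq_one_iff_adj.2 hw.symm
  have h3 : G.dist w r ≠ G.dist v r := (st17_adj_dist_ne hT hw.symm)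
  by_cases h4 : G.dist w r + 1 = G.dist v r
  · exfalso
    apply hne
    apply st17_parent_unique hT (x := r) hw.symm hpar
    · rw [SimpleGraph.dist_comm (u := r) (v := w), SimpleGraph.dist_comm (u := r) (v := v)]; exact h4
    · rw [SimpleGraph.dist_comm (u := r) (v := p), SimpleGraph.dist_comm (u := r) (v := v)]; omega
  · omega

/-- the "subtree" of v away from r -/
noncomputable def st17D (G : SimpleGraph V) (r v : V) : Finset V := by
  classical exact Finset.univ.filter (fun w => G.dist w r = G.dist w v + G.dist v r)

lemma st17_mem_D {r v w : V} :
    w ∈ st17D G r v ↔ G.dist w r = G.dist w v + G.dist v r := by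
  classical
  simp [st17D]

lemma st17_self_mem_D (r v : V) : v ∈ st17D G r v := by
  simp [st17_mem_D]

lemma st17_D_root (r : V) : st17D G r r = Finset.univ := by
  ext x; simp [st17_mem_D]

lemma st17_D_subset (hT : G.IsTree) {r v w : V} (hadj : G.Adj v w)
    (hd : G.dist w r = G.dist v r + 1) :
    st17D G r w ⊆ (st17D G r v).erase v := by
  have hconn := hT.isConnected
  intro x hx
  rw [st17_mem_D] at hx
  have hvw : G.dist x v ≤ G.dist x w + G.dist w v := hconn.dist_triangle
  have hwv : G.dist w v = 1 := SimpleGraph.dist_eq_one_iff_adj.2 hadj.symm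
  have ht : G.dist x r ≤ G.dist x v + G.dist v r := hconn.dist_triangle
  rw [Finset.mem_erase, st17_mem_D]
  constructor
  · rintro rfl
    have hx0 : G.dist x x = 0 := SimpleGraph.dist_self
    have hxw : G.dist x w = 1 := SimpleGraph.dist_eq_one_iff_adj.2 hadj
    omega
  · omega

lemma st17_D_disjoint (hT : G.IsTree) {r v w₁ w₂ : V}
    (h1 : G.Adj v w₁) (h2 : G.Adj v w₂)
    (hd1 : G.dist w₁ r = G.dist v r + 1) (hd2 : G.dist w₂ r = G.dist v r + 1)
    (hne : w₁ ≠ w₂) : Disjoint (st17D G r w₁) (st17D G r w₂) := by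
  have hconn := hT.isConnected
  rw [Finset.disjoint_left]
  intro x hx1 hx2
  rw [st17_mem_D] at hx1 hx2
  apply hne
  have key : ∀ w : V, G.Adj v w → G.dist w r = G.dist v r + 1 →
      G.dist x r = G.dist x w + G.dist w r → G.dist x w + 1 = G.dist x v := by
    intro w hwadj hd hx
    have t1 : G.dist x v ≤ G.dist x w + G.dist w v := hconn.dist_triangle
    have hw1 : G.dist w v = 1 := SimpleGraph.dist_eq_one_iff_adj.2 hwadj.symm
    have t2 : G.dist x r ≤ G.dist x v + G.dist v r := hconn.dist_triangle
    omega
  exact st17_parent_unique hT h1.symm h2.symm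
    (key w₁ h1 hd1 hx1) (key w₂ h2 hd2 hx2)

lemma st17_count (hT : G.IsTree) {r v : V} {c : V → ℕ}
    (s : Finset ℕ) (w : ℕ → V)
    (hcol : ∀ m ∈ s, c (w m) = m)
    (hadj : ∀ m ∈ s, G.Adj v (w m))
    (hch : ∀ m ∈ s, G.dist (w m) r = G.dist v r + 1) :
    1 + ∑ m ∈ s, (st17D G r (w m)).card ≤ (st17D G r v).card := by
  have hdisj : ∀ m₁ ∈ s, ∀ m₂ ∈ s, m₁ ≠ m₂ →
      Disjoint (st17D G r (w m₁)) (st17D G r (w m₂)) := by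
    intro m₁ h₁ m₂ h₂ hne
    exact st17_D_disjoint hT (hadj m₁ h₁) (hadj m₂ h₂) (hch m₁ h₁) (hch m₂ h₂)
      (fun h => hne (by rw [← hcol m₁ h₁, ← hcol m₂ h₂, h]))
  have hsub : s.biUnion (fun m => st17D G r (w m)) ⊆ (st17D G r v).erase v := by
    apply Finset.biUnion_subset.2
    intro m hm
    exact st17_D_subset hT (hadj m hm) (hch m hm)
  have h1 := Finset.card_le_card hsub
  rw [Finset.card_biUnion hdisj] at h1
  have h2 : ((st17D G r v).erase v).card = (st17D G r v).card - 1 :=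
    Finset.card_erase_of_mem (st17_self_mem_D r v)
  have h3 : 1 ≤ (st17D G r v).card := Finset.card_pos.2 ⟨v, st17_self_mem_D r v⟩
  omega

lemma st17_geomN : ∀ t : ℕ, 1 + ∑ l ∈ Finset.Icc 1 t, 2 ^ (l - 1) = 2 ^ t := by
  intro t
  induction t with
  | zero => simp
  | succ n ih =>
    rw [Finset.sum_Icc_succ_top (by omega)]
    have : n + 1 - 1 = n := by omega
    rw [this]
    rw [pow_succ]
    omega

/-- Main induction: subtree below a vertex `v` with parent `p`. -/
lemma st17_claim (hT : G.IsTree) {k : ℕ} {c : V → ℕ}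
    (hgr : IsGrundyColoring G k c) (r : V) :
    ∀ n v p, c v = n → G.Adj p v → G.dist v r = G.dist p r + 1 →
      1 + ∑ m ∈ (Finset.Icc 1 (n - 1)).erase (c p), 2 ^ (m - 1) ≤ (st17D G r v).card := by
  intro n
  induction n using Nat.strong_induction_on with
  | _ n IH =>
    intro v p hcv hadj hdist
    have hcvk : c v ∈ Finset.Icc 1 k := hgr.1.1 v
    rw [Finset.mem_Icc] at hcvk
    set s := (Finset.Icc 1 (n - 1)).erase (c p) with hs
    have hex : ∀ m : ℕ, ∃ wm : V, m ∈ s →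
        G.Adj v wm ∧ c wm = m ∧ G.dist wm r = G.dist v r + 1 := by
      intro m
      by_cases hm : m ∈ s
      · have hm' := Finset.mem_of_mem_erase hm
        rw [Finset.mem_Icc] at hm'
        have hmne : m ≠ c p := Finset.ne_of_mem_erase hm
        obtain ⟨wm, hwadj, hwc⟩ := hgr.2 v m
          (Finset.mem_Icc.2 ⟨hm'.1, by omega⟩) (by omega)
        refine ⟨wm, fun _ => ⟨hwadj, hwc, ?_⟩⟩
        exact st17_child hT hadj hdist hwadj (fun h => hmne (h ▸ hwc ▸ rfl))
      · exact ⟨v, fun h => absurd h hm⟩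
    choose w hw using hex
    have hb : ∀ m ∈ s, 2 ^ (m - 1) ≤ (st17D G r (w m)).card := by
      intro m hm
      obtain ⟨hwadj, hwc, hwd⟩ := hw m hm
      have hm' := Finset.mem_of_mem_erase hm
      rw [Finset.mem_Icc] at hm'
      have hmn : m < n := by omega
      have h := IH m hmn (w m) v hwc hwadj hwd
      rw [hcv] at h
      rw [Finset.erase_eq_of_notMem (by rw [Finset.mem_Icc]; omega)] at h
      rw [st17_geomN] at h
      exact h
    calc 1 + ∑ m ∈ s, 2 ^ (m - 1)
        ≤ 1 + ∑ m ∈ s, (st17D G r (w m)).card := by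
          gcongr with m hm
          exact hb m hm
      _ ≤ (st17D G r v).card :=
          st17_count hT s w (fun m hm => (hw m hm).2.1)
            (fun m hm => (hw m hm).1) (fun m hm => (hw m hm).2.2)

end ST17AUX

section ST17NUM


open Finset

lemma st17_geomZ : ∀ t : ℕ, ∑ l ∈ Finset.Icc 1 t, (2:ℤ) ^ (l - 1) = 2 ^ t - 1 := by
  intro t
  induction t with
  | zero => simp
  | succ n ih =>
    rw [Finset.sum_Icc_succ_top (by omega), ih]
    have : n + 1 - 1 = n := by omega
    rw [this, pow_succ]
    ring

lemma st17_F (i j : ℕ) (hj1 : 1 ≤ j) :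
    (1:ℤ) + ∑ l ∈ (Finset.Icc 1 (i-1)).erase j, (2:ℤ)^(l-1)
      = 2^(i-1) - (if j < i then (2:ℤ)^(j-1) else 0) := by
  by_cases h : j < i
  · have hjm : j ∈ Finset.Icc 1 (i-1) := by rw [Finset.mem_Icc]; omega
    rw [Finset.sum_erase_eq_sub hjm, st17_geomZ]
    simp only [h, if_true]
    ring
  · rw [Finset.erase_eq_of_notMem (by rw [Finset.mem_Icc]; omega), st17_geomZ]
    simp only [h, if_false]
    ring

lemma st17_Sj (n j : ℕ) (hj : j ∈ Finset.Icc 1 n) :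
    (1 : ℤ) + ∑ i ∈ (Finset.Icc 1 n).erase j,
        ((1 : ℤ) + ∑ l ∈ (Finset.Icc 1 (i-1)).erase j, (2:ℤ)^(l-1))
      = 2^n - ((n:ℤ) - j + 1) * 2^(j-1) := by
  rw [Finset.mem_Icc] at hj
  have hcong : ∑ i ∈ (Finset.Icc 1 n).erase j,
      ((1 : ℤ) + ∑ l ∈ (Finset.Icc 1 (i-1)).erase j, (2:ℤ)^(l-1))
      = ∑ i ∈ (Finset.Icc 1 n).erase j,
        ((2:ℤ)^(i-1) - (if j < i then (2:ℤ)^(j-1) else 0)) :=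
    Finset.sum_congr rfl (fun i hi => st17_F i j hj.1)
  rw [hcong, Finset.sum_sub_distrib]
  have h1 : ∑ i ∈ (Finset.Icc 1 n).erase j, (2:ℤ)^(i-1)
      = (2^n - 1) - 2^(j-1) := by
    rw [Finset.sum_erase_eq_sub (Finset.mem_Icc.2 hj), st17_geomZ]
  have h2 : ∑ i ∈ (Finset.Icc 1 n).erase j, (if j < i then (2:ℤ)^(j-1) else 0)
      = ((n : ℤ) - j) * 2^(j-1) := by
    rw [Finset.sum_erase _ (by simp)]
    rw [← Finset.sum_filter]
    have hfil : (Finset.Icc 1 n).filter (fun i => j < i) = Finset.Icc (j+1) n := by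
      ext i
      simp only [Finset.mem_filter, Finset.mem_Icc]
      omega
    rw [hfil, Finset.sum_const, Nat.card_Icc]
    have : n + 1 - (j + 1) = n - j := by omega
    rw [this, nsmul_eq_mul]
    rw [Nat.cast_sub hj.2]
  rw [h1, h2]
  ring

lemma st17_num2 : ∀ n : ℕ, ∑ j ∈ Finset.Icc 1 n, (((n:ℤ) - j + 1) * 2^(j-1))
    = 2^(n+1) - n - 2 := by
  intro n
  induction n with
  | zero => simp
  | succ n ih =>
    rw [Finset.sum_Icc_succ_top (by omega)]
    have hcong : ∑ j ∈ Finset.Icc 1 n, ((((n:ℕ)+1:ℤ) - j + 1) * 2^(j-1))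
        = ∑ j ∈ Finset.Icc 1 n, (((n:ℤ) - j + 1) * 2^(j-1) + 2^(j-1)) :=
      Finset.sum_congr rfl (fun j hj => by push_cast; ring)
    push_cast
    push_cast at hcong
    rw [hcong, Finset.sum_add_distrib, ih, st17_geomZ]
    push_cast
    ring

lemma st17_num (n : ℕ) :
    ((n:ℤ) - 2) * 2 ^ n + n + 3
      ≤ ((1 + ∑ j ∈ Finset.Icc 1 n, (1 + ∑ i ∈ (Finset.Icc 1 n).erase j,
          (1 + ∑ l ∈ (Finset.Icc 1 (i-1)).erase j, 2^(l-1))) : ℕ) : ℤ) := by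
  have hcast : ((1 + ∑ j ∈ Finset.Icc 1 n, (1 + ∑ i ∈ (Finset.Icc 1 n).erase j,
      (1 + ∑ l ∈ (Finset.Icc 1 (i-1)).erase j, 2^(l-1))) : ℕ) : ℤ)
      = 1 + ∑ j ∈ Finset.Icc 1 n, ((1:ℤ) + ∑ i ∈ (Finset.Icc 1 n).erase j,
          ((1:ℤ) + ∑ l ∈ (Finset.Icc 1 (i-1)).erase j, (2:ℤ)^(l-1))) := by
    push_cast
    ring
  rw [hcast]
  have hcong : ∑ j ∈ Finset.Icc 1 n, ((1:ℤ) + ∑ i ∈ (Finset.Icc 1 n).erase j,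
      ((1:ℤ) + ∑ l ∈ (Finset.Icc 1 (i-1)).erase j, (2:ℤ)^(l-1)))
      = ∑ j ∈ Finset.Icc 1 n, ((2:ℤ)^n - ((n:ℤ) - j + 1) * 2^(j-1)) :=
    Finset.sum_congr rfl (fun j hj => st17_Sj n j hj)
  rw [hcong, Finset.sum_sub_distrib, st17_num2, Finset.sum_const, Nat.card_Icc]
  simp only [nsmul_eq_mul]
  have : ((n + 1 - 1 : ℕ) : ℤ) = n := by push_cast; omega
  rw [this]
  ring_nf
  omega

end ST17NUM

/-- If a finite tree admits a z-coloring using `k` colors, then it has at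
least `(k-3)·2^(k-1) + k + 2` vertices (an inequality of integers). -/
theorem statement_17 {V : Type*} [Fintype V] (G : SimpleGraph V) (hT : G.IsTree)
    (k : ℕ) (c : V → ℕ) (hc : IsZColoring G k c) :
    ((k : ℤ) - 3) * 2 ^ (k - 1) + (k : ℤ) + 2 ≤ (Fintype.card V : ℤ) := by
  classical
  rcases Nat.eq_zero_or_pos k with hk0 | hk
  · subst hk0
    have h := Int.natCast_nonneg (Fintype.card V)
    norm_num
  · obtain ⟨hgr, hb, u, hu1, hu2⟩ := hc
    set r := u k with hr
    have hkk : k ∈ Finset.Icc 1 k := Finset.mem_Icc.2 ⟨hk, le_refl k⟩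
    have hcr : c r = k := (hu1 k hkk).1
    have hsub : ∀ j ∈ Finset.Icc 1 (k-1), j ∈ Finset.Icc 1 k ∧ j ≠ k := by
      intro j hj
      rw [Finset.mem_Icc] at hj
      exact ⟨Finset.mem_Icc.2 ⟨hj.1, by omega⟩, by omega⟩
    have hadjr : ∀ j ∈ Finset.Icc 1 (k-1), G.Adj r (u j) :=
      fun j hj => hu2 j (hsub j hj).1 (hsub j hj).2
    have hcolr : ∀ j ∈ Finset.Icc 1 (k-1), c (u j) = j :=
      fun j hj => (hu1 j (hsub j hj).1).1
    have hchr : ∀ j ∈ Finset.Icc 1 (k-1), G.dist (u j) r = G.dist r r + 1 := by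
      intro j hj
      have h0 : G.dist r r = 0 := SimpleGraph.dist_self
      have h1 : G.dist (u j) r = 1 :=
        SimpleGraph.dist_eq_one_iff_adj.2 (hadjr j hj).symm
      omega
    have hroot := st17_count (c := c) hT (Finset.Icc 1 (k-1)) u hcolr hadjr hchr
    rw [st17_D_root] at hroot
    have hperj : ∀ j ∈ Finset.Icc 1 (k-1),
        1 + ∑ i ∈ (Finset.Icc 1 (k-1)).erase j,
            (1 + ∑ l ∈ (Finset.Icc 1 (i-1)).erase j, 2^(l-1))
          ≤ (st17D G r (u j)).card := by
      intro j hj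
      have hjk := (hsub j hj)
      have hcd := (hu1 j hjk.1).2
      have hex : ∀ i : ℕ, ∃ wi : V, i ∈ (Finset.Icc 1 (k-1)).erase j →
          G.Adj (u j) wi ∧ c wi = i ∧ G.dist wi r = G.dist (u j) r + 1 := by
        intro i
        by_cases hi : i ∈ (Finset.Icc 1 (k-1)).erase j
        · have hi' := Finset.mem_of_mem_erase hi
          rw [Finset.mem_Icc] at hi'
          have hine := Finset.ne_of_mem_erase hi
          obtain ⟨wi, hwadj, hwc⟩ := hcd i (Finset.mem_Icc.2 ⟨hi'.1, by omega⟩)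
            (by rw [hcolr j hj]; exact hine)
          refine ⟨wi, fun _ => ⟨hwadj, hwc, ?_⟩⟩
          apply st17_child hT (hadjr j hj) (hchr j hj) hwadj
          intro h
          rw [h] at hwc
          rw [hcr] at hwc
          omega
        · exact ⟨u j, fun h => absurd h hi⟩
      choose w hw using hex
      have hbi : ∀ i ∈ (Finset.Icc 1 (k-1)).erase j,
          1 + ∑ l ∈ (Finset.Icc 1 (i-1)).erase j, 2^(l-1)
            ≤ (st17D G r (w i)).card := by
        intro i hi
        obtain ⟨hwadj, hwc, hwd⟩ := hw i hi
        have h := st17_claim hT hgr r i (w i) (u j) hwc hwadj hwd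
        rwa [hcolr j hj] at h
      calc 1 + ∑ i ∈ (Finset.Icc 1 (k-1)).erase j,
              (1 + ∑ l ∈ (Finset.Icc 1 (i-1)).erase j, 2^(l-1))
          ≤ 1 + ∑ i ∈ (Finset.Icc 1 (k-1)).erase j, (st17D G r (w i)).card := by
            gcongr with i hi
            exact hbi i hi
        _ ≤ (st17D G r (u j)).card :=
            st17_count (c := c) hT ((Finset.Icc 1 (k-1)).erase j) w
              (fun i hi => (hw i hi).2.1) (fun i hi => (hw i hi).1)
              (fun i hi => (hw i hi).2.2)
    have htot : 1 + ∑ j ∈ Finset.Icc 1 (k-1),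
        (1 + ∑ i ∈ (Finset.Icc 1 (k-1)).erase j,
          (1 + ∑ l ∈ (Finset.Icc 1 (i-1)).erase j, 2^(l-1)))
        ≤ Fintype.card V := by
      calc 1 + ∑ j ∈ Finset.Icc 1 (k-1),
            (1 + ∑ i ∈ (Finset.Icc 1 (k-1)).erase j,
              (1 + ∑ l ∈ (Finset.Icc 1 (i-1)).erase j, 2^(l-1)))
          ≤ 1 + ∑ j ∈ Finset.Icc 1 (k-1), (st17D G r (u j)).card := by
            gcongr with j hj
            exact hperj j hj
        _ ≤ Finset.univ.card := hroot
        _ = Fintype.card V := Finset.card_univ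
    obtain ⟨n, rfl⟩ : ∃ n, k = n + 1 := ⟨k - 1, by omega⟩
    simp only [Nat.add_sub_cancel] at htot ⊢
    have hnum := st17_num n
    have hcast := (Nat.cast_le (α := ℤ)).2 htot
    push_cast at hcast hnum ⊢
    linarith
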